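/- Let n ∈ ℕ and q ∈ ℂ with q ≠ 0. The (n+1)×(n+1) complex matrix N with entries N_{km} = C(k, m)_{q⁻¹} satisfies σ₂(q,n)·N = 1 and N·σ₂(q,n) = 1; that is, σ₂(q,n) is invertible with inverse entries σ₂(q,n)⁻¹_{km} = C(k,m)_{q⁻¹}. -/
import Mathlib


/-- The Gaussian ($q$-)binomial coefficient `C(n,k)_q`, defined by the recursion
`C(n+1,k)_q = C(n,k-1)_q + q^k * C(n,k)_q`, with `C(n,0)_q = C(n,n)_q = 1` and
`C(n,k)_q = 0` for `k > n`. -/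
noncomputable def qBinom (q : ℂ) : ℕ → ℕ → ℂ
  | 0, 0 => 1
  | 0, _ + 1 => 0
  | _ + 1, 0 => 1
  | n + 1, k + 1 => qBinom q n k + q ^ (k + 1) * qBinom q n (k + 1)

/-- The matrix `σ₁(q,n)` with entries `σ₁(q,n)_{km} = C(n-k, n-m)_q`. -/
noncomputable def sigma1 (q : ℂ) (n : ℕ) : Matrix (Fin (n + 1)) (Fin (n + 1)) ℂ :=
  fun k m => qBinom q (n - k.val) (n - m.val)

/-- The matrix `σ₂(q,n)` with entries
`σ₂(q,n)_{km} = (-1)^{k+m} q^{-(k-m)(k-m-1)/2} C(k,m)_{q⁻¹}` for `m ≤ k`, and `0` otherwise. -/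
noncomputable def sigma2 (q : ℂ) (n : ℕ) : Matrix (Fin (n + 1)) (Fin (n + 1)) ℂ :=
  fun k m =>
    if m.val ≤ k.val then
      (-1 : ℂ) ^ (k.val + m.val) *
        q ^ (-(((k.val - m.val) * (k.val - m.val - 1) / 2 : ℕ) : ℤ)) *
        qBinom q⁻¹ k.val m.val
    else 0

/-- The matrix `S(q)` with entries `S(q)_{km} = (-1)^k q^{-k(k-1)/2}` when `k+m = n`,
and `0` otherwise. -/
noncomputable def Smat (q : ℂ) (n : ℕ) : Matrix (Fin (n + 1)) (Fin (n + 1)) ℂ :=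
  fun k m =>
    if k.val + m.val = n then (-1 : ℂ) ^ k.val * q ^ (-((k.val * (k.val - 1) / 2 : ℕ) : ℤ))
    else 0

/-- `A^♯`, the matrix with entries `(A^♯)_{ij} = A_{n-i, n-j}`. -/
noncomputable def msharp {n : ℕ} (A : Matrix (Fin (n + 1)) (Fin (n + 1)) ℂ) :
    Matrix (Fin (n + 1)) (Fin (n + 1)) ℂ :=
  fun i j => A i.rev j.rev

lemma qBinom_zero_right (q : ℂ) (n : ℕ) : qBinom q n 0 = 1 := by
  cases n <;> rfl

lemma qBinom_succ_succ (q : ℂ) (n k : ℕ) :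
    qBinom q (n+1) (k+1) = qBinom q n k + q ^ (k + 1) * qBinom q n (k + 1) := rfl

lemma qBinom_eq_zero (q : ℂ) : ∀ {n k : ℕ}, n < k → qBinom q n k = 0 := by
  intro n
  induction n with
  | zero =>
    intro k hk
    match k, hk with
    | k+1, _ => rfl
  | succ n ih =>
    intro k hk
    match k, hk with
    | k+1, hk =>
      rw [qBinom_succ_succ, ih (by omega), ih (by omega), mul_zero, add_zero]

lemma qBinom_self (q : ℂ) (n : ℕ) : qBinom q n n = 1 := by
  induction n with
  | zero => rfl
  | succ n ih =>
    rw [qBinom_succ_succ, ih, qBinom_eq_zero q (by omega), mul_zero, add_zero]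

lemma qBinom_orth (p : ℂ) (k : ℕ) : ∀ j : ℕ,
    (∑ m ∈ Finset.range (k+1),
      (-1:ℂ)^(k+m) * p^((k-m).choose 2) * qBinom p k m * qBinom p m j)
    = if k = j then 1 else 0 := by
  induction k with
  | zero =>
    intro j
    cases j <;> simp [qBinom]
  | succ k ih =>
    intro j
    rw [Finset.sum_range_succ']
    have hsplit : ∀ m ∈ Finset.range (k+1),
        (-1:ℂ)^(k+1+(m+1)) * p^((k+1-(m+1)).choose 2) * qBinom p (k+1) (m+1)
          * qBinom p (m+1) j
        = (-1:ℂ)^(k+m) * p^((k-m).choose 2) * qBinom p k m * qBinom p (m+1) j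
          + (-1:ℂ)^(k+1+(m+1)) * p^((k+1-(m+1)).choose 2 + (m+1)) * qBinom p k (m+1)
            * qBinom p (m+1) j := by
      intro m _
      rw [qBinom_succ_succ, show k+1+(m+1) = (k+m)+2 from by omega,
        Nat.succ_sub_succ, pow_add, pow_add]
      ring
    rw [Finset.sum_congr rfl hsplit, Finset.sum_add_distrib]
    -- B' + t0 = ∑_{m ∈ range (k+2)} f m  where
    -- f m := (-1)^(k+1+m) * p^((k+1-m).choose 2 + m) * qBinom p k m * qBinom p m j
    have hB : (∑ m ∈ Finset.range (k+2),
            (-1:ℂ)^(k+1+m) * p^((k+1-m).choose 2 + m) * qBinom p k m * qBinom p m j)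
        = (∑ m ∈ Finset.range (k+1),
          (-1:ℂ)^(k+1+(m+1)) * p^((k+1-(m+1)).choose 2 + (m+1)) * qBinom p k (m+1)
            * qBinom p (m+1) j)
        + (-1:ℂ)^(k+1+0) * p^((k+1-0).choose 2) * qBinom p (k+1) 0 * qBinom p 0 j := by
      conv_lhs => rw [Finset.sum_range_succ']
      congr 1
      simp [qBinom_zero_right]
    have hlast : (∑ m ∈ Finset.range (k+2),
            (-1:ℂ)^(k+1+m) * p^((k+1-m).choose 2 + m) * qBinom p k m * qBinom p m j)
        = ∑ m ∈ Finset.range (k+1),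
            (-1:ℂ)^(k+1+m) * p^((k+1-m).choose 2 + m) * qBinom p k m * qBinom p m j := by
      rw [Finset.sum_range_succ, qBinom_eq_zero p (by omega : k < k+1),
        mul_zero, zero_mul, add_zero]
    rw [add_assoc, ← hB, hlast]
    have hBval : (∑ m ∈ Finset.range (k+1),
          (-1:ℂ)^(k+1+m) * p^((k+1-m).choose 2 + m) * qBinom p k m * qBinom p m j)
        = -(p^k * (if k = j then 1 else 0)) := by
      rw [← ih j, Finset.mul_sum, ← Finset.sum_neg_distrib]
      apply Finset.sum_congr rfl
      intro m hm
      have hmk : m ≤ k := by simpa using Nat.lt_succ_iff.mp (Finset.mem_range.mp hm)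
      have he : (k+1-m).choose 2 + m = (k-m).choose 2 + k := by
        have h2 : (k-m+1).choose 2 = (k-m).choose 1 + (k-m).choose 2 :=
          Nat.choose_succ_succ (k-m) 1
        rw [show k+1-m = (k-m)+1 from by omega, h2, Nat.choose_one_right]
        omega
      rw [he, show k+1+m = (k+m)+1 from by omega, pow_succ, pow_add]
      ring
    rw [hBval]
    -- now handle A depending on j
    cases j with
    | zero =>
      have hA : (∑ m ∈ Finset.range (k+1),
            (-1:ℂ)^(k+m) * p^((k-m).choose 2) * qBinom p k m * qBinom p (m+1) 0)
          = if k = 0 then 1 else 0 := by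
        rw [← ih 0]
        apply Finset.sum_congr rfl
        intro m _
        rw [qBinom_zero_right, qBinom_zero_right]
      rw [hA]
      rcases Nat.eq_zero_or_pos k with hk | hk
      · subst hk; norm_num
      · simp [Nat.pos_iff_ne_zero.mp hk, (by omega : ¬ k + 1 = 0)]
    | succ j =>
      have hA : (∑ m ∈ Finset.range (k+1),
            (-1:ℂ)^(k+m) * p^((k-m).choose 2) * qBinom p k m * qBinom p (m+1) (j+1))
          = (if k = j then 1 else 0) + p^(j+1) * (if k = j+1 then 1 else 0) := by
        rw [← ih j, ← ih (j+1), Finset.mul_sum, ← Finset.sum_add_distrib]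
        apply Finset.sum_congr rfl
        intro m _
        rw [qBinom_succ_succ]
        ring
      rw [hA]
      by_cases hkj : k = j+1
      · subst hkj
        simp
      · by_cases hkj2 : k = j
        · subst hkj2
          simp [hkj]
        · simp [hkj, hkj2, show ¬ k + 1 = j + 1 from by omega]

/-- For `q ≠ 0`, the matrix `N` with entries `N_{km} = C(k,m)_{q⁻¹}`
is a two-sided inverse of `σ₂(q,n)`. -/
theorem sigma2_inverse (n : ℕ) (q : ℂ) (hq : q ≠ 0)
    (N : Matrix (Fin (n + 1)) (Fin (n + 1)) ℂ)
    (hN : ∀ k m : Fin (n + 1), N k m = qBinom q⁻¹ k.val m.val) :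
    sigma2 q n * N = 1 ∧ N * sigma2 q n = 1 := by
  have h1 : sigma2 q n * N = 1 := by
    ext k j
    rw [Matrix.mul_apply, Matrix.one_apply]
    have step1 : ∀ m : Fin (n+1), sigma2 q n k m * N m j
        = (fun t : ℕ => if t ≤ (k:ℕ) then
            (-1:ℂ)^((k:ℕ)+t) * (q⁻¹)^(((k:ℕ)-t).choose 2) * qBinom q⁻¹ (k:ℕ) t
              * qBinom q⁻¹ t (j:ℕ) else 0) (m:ℕ) := by
      intro m
      rw [hN, sigma2]
      dsimp only
      split_ifs with h
      · have hz : q ^ (-((((k:ℕ)-(m:ℕ))*(((k:ℕ)-(m:ℕ))-1)/2 : ℕ) : ℤ))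
            = (q⁻¹)^(((k:ℕ)-(m:ℕ)).choose 2) := by
          rw [Nat.choose_two_right, inv_pow, ← zpow_natCast q, ← zpow_neg]
        rw [hz]
      · rw [zero_mul]
    calc ∑ m : Fin (n+1), sigma2 q n k m * N m j
        = ∑ m : Fin (n+1), (fun t : ℕ => if t ≤ (k:ℕ) then
            (-1:ℂ)^((k:ℕ)+t) * (q⁻¹)^(((k:ℕ)-t).choose 2) * qBinom q⁻¹ (k:ℕ) t
              * qBinom q⁻¹ t (j:ℕ) else 0) (m:ℕ) :=
          Finset.sum_congr rfl (fun m _ => step1 m)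
      _ = ∑ m ∈ Finset.range (n+1), (if m ≤ (k:ℕ) then
            (-1:ℂ)^((k:ℕ)+m) * (q⁻¹)^(((k:ℕ)-m).choose 2) * qBinom q⁻¹ (k:ℕ) m
              * qBinom q⁻¹ m (j:ℕ) else 0) := by
          exact Fin.sum_univ_eq_sum_range (fun t : ℕ => if t ≤ (k:ℕ) then
            (-1:ℂ)^((k:ℕ)+t) * (q⁻¹)^(((k:ℕ)-t).choose 2) * qBinom q⁻¹ (k:ℕ) t
              * qBinom q⁻¹ t (j:ℕ) else 0) (n+1)
      _ = ∑ m ∈ Finset.range ((k:ℕ)+1), (if m ≤ (k:ℕ) then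
            (-1:ℂ)^((k:ℕ)+m) * (q⁻¹)^(((k:ℕ)-m).choose 2) * qBinom q⁻¹ (k:ℕ) m
              * qBinom q⁻¹ m (j:ℕ) else 0) :=
          (Finset.sum_subset (Finset.range_subset_range.mpr (by omega))
            (fun x _ hx => if_neg (by simp only [Finset.mem_range] at hx; omega))).symm
      _ = ∑ m ∈ Finset.range ((k:ℕ)+1),
            (-1:ℂ)^((k:ℕ)+m) * (q⁻¹)^(((k:ℕ)-m).choose 2) * qBinom q⁻¹ (k:ℕ) m
              * qBinom q⁻¹ m (j:ℕ) :=
          Finset.sum_congr rfl (fun m hm =>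
            if_pos (by simp only [Finset.mem_range] at hm; omega))
      _ = if (k:ℕ) = (j:ℕ) then 1 else 0 := qBinom_orth q⁻¹ (k:ℕ) (j:ℕ)
      _ = if k = j then 1 else 0 := by simp [Fin.ext_iff]
  exact ⟨h1, mul_eq_one_comm.mp h1⟩
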